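/- arXiv:1510.03950 — 7 statements merged into one kernel-verified Lean document; each statement's English description precedes it below -/
import Mathlib

section
/- For any real numbers x, y, ε_x, ε_y with x ≠ 0 and y ≠ 0, if |ε_x/x| ≤ 1/2 and |ε_y/y| ≤ 1/2, then |(x+ε_x)/(y+ε_y) - x/y| ≤ (|ε_x·y| + 3|ε_y·x|)/y². -/
theorem stmt_0 (x y εx εy : ℝ) (hx : x ≠ 0) (hy : y ≠ 0)
    (h1 : |εx / x| ≤ 1 / 2) (h2 : |εy / y| ≤ 1 / 2) :
    |(x + εx) / (y + εy) - x / y| ≤ (|εx * y| + 3 * |εy * x|) / y ^ 2 := by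
  have hy' : (0:ℝ) < |y| := abs_pos.mpr hy
  have hx' : (0:ℝ) < |x| := abs_pos.mpr hx
  have hεy : |εy| ≤ |y| / 2 := by
    rw [abs_div] at h2
    rw [div_le_iff₀ hy'] at h2
    linarith
  have hεx : |εx| ≤ |x| / 2 := by
    rw [abs_div] at h1
    rw [div_le_iff₀ hx'] at h1
    linarith
  have hd : |y| / 2 ≤ |y + εy| := by
    have h3 : |y| ≤ |y + εy| + |εy| := by
      calc |y| = |(y + εy) - εy| := by ring_nf
        _ ≤ |y + εy| + |εy| := abs_sub _ _
    linarith
  have hdpos : (0:ℝ) < |y + εy| := lt_of_lt_of_le (by linarith) hd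
  have hdne : y + εy ≠ 0 := fun h => by simp [h] at hdpos
  have key : (x + εx) / (y + εy) - x / y = εx / y - εy * (x + εx) / (y * (y + εy)) := by
    field_simp
    ring
  rw [key]
  have hA : |εx / y| = |εx * y| / y ^ 2 := by
    rw [abs_div, abs_mul]
    rw [div_eq_div_iff hy'.ne' (by positivity), ← sq_abs y]
    ring
  have hB : |εy * (x + εx) / (y * (y + εy))| ≤ 3 * |εy * x| / y ^ 2 := by
    rw [abs_div, abs_mul, abs_mul, abs_mul]
    rw [div_le_div_iff₀ (by positivity) (by positivity)]
    have hxe : |x + εx| ≤ 3 / 2 * |x| := by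
      calc |x + εx| ≤ |x| + |εx| := abs_add_le _ _
        _ ≤ 3 / 2 * |x| := by linarith
    have h2' : |y| * (|y| / 2) ≤ |y| * |y + εy| := by
      exact mul_le_mul_of_nonneg_left hd (abs_nonneg y)
    calc |εy| * |x + εx| * y ^ 2 ≤ |εy| * (3 / 2 * |x|) * y ^ 2 := by
          apply mul_le_mul_of_nonneg_right _ (by positivity)
          exact mul_le_mul_of_nonneg_left hxe (abs_nonneg εy)
      _ = 3 * (|εy| * |x|) * (|y| * (|y| / 2)) := by rw [← sq_abs y]; ring
      _ ≤ 3 * (|εy| * |x|) * (|y| * |y + εy|) := by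
          apply mul_le_mul_of_nonneg_left h2' (by positivity)
  calc |εx / y - εy * (x + εx) / (y * (y + εy))|
      ≤ |εx / y| + |εy * (x + εx) / (y * (y + εy))| := abs_sub _ _
    _ ≤ |εx * y| / y ^ 2 + 3 * |εy * x| / y ^ 2 := by rw [hA]; linarith
    _ = (|εx * y| + 3 * |εy * x|) / y ^ 2 := by ring
end

section
/- Let a, d, m, n, r be positive integers and let G be a graph on n vertices with average degree d = 2|E(G)|/n. If there is a positive integer t such that d^t/n^{t-1} - n^r·(m/n)^t ≥ a, then G contains a subset U of at least a vertices such that every r vertices in U have at least m common neighbors. -/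
namespace DRCaux

variable {V : Type*} [Fintype V] [DecidableEq V] (G : SimpleGraph V) [DecidableRel G.Adj]

/-- common neighborhood of a set -/
def CN (S : Finset V) : Finset V := Finset.univ.filter (fun v => ∀ u ∈ S, G.Adj u v)

/-- common neighborhood of a tuple -/
def A {t : ℕ} (w : Fin t → V) : Finset V := Finset.univ.filter (fun v => ∀ i, G.Adj (w i) v)

lemma mem_A {t : ℕ} {w : Fin t → V} {v : V} : v ∈ A G w ↔ ∀ i, G.Adj (w i) v := by
  simp [A]

lemma mem_CN {S : Finset V} {v : V} : v ∈ CN G S ↔ ∀ u ∈ S, G.Adj u v := by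
  simp [CN]

lemma subset_A_iff {t : ℕ} (S : Finset V) (w : Fin t → V) :
    S ⊆ A G w ↔ ∀ i, w i ∈ CN G S := by
  simp only [Finset.subset_iff, mem_A, mem_CN]
  exact ⟨fun h i u hu => (h hu i).symm, fun h u hu i => (h i u hu).symm⟩

lemma count_tuples {t : ℕ} (S : Finset V) :
    (Finset.univ.filter (fun w : Fin t → V => S ⊆ A G w)).card = (CN G S).card ^ t := by
  have h : (Finset.univ.filter (fun w : Fin t → V => S ⊆ A G w)) =
      Fintype.piFinset (fun _ : Fin t => CN G S) := by
    ext w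
    simp [subset_A_iff, Fintype.mem_piFinset]
  rw [h, Fintype.card_piFinset_const]

lemma sumA {t : ℕ} : ∑ w : Fin t → V, (A G w).card = ∑ v : V, (G.degree v) ^ t := by
  simp only [A, Finset.card_filter]
  rw [Finset.sum_comm]
  refine Finset.sum_congr rfl fun v _ => ?_
  rw [← Finset.card_filter]
  have h : (Finset.univ.filter (fun w : Fin t → V => ∀ i, G.Adj (w i) v)) =
      Fintype.piFinset (fun _ : Fin t => G.neighborFinset v) := by
    ext w
    simp [Fintype.mem_piFinset, SimpleGraph.mem_neighborFinset, G.adj_comm]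
  rw [h, Fintype.card_piFinset_const, SimpleGraph.card_neighborFinset_eq_degree]

lemma sumBad {t : ℕ} (bad : Finset (Finset V)) :
    ∑ w : Fin t → V, (bad.filter (· ⊆ A G w)).card = ∑ S ∈ bad, (CN G S).card ^ t := by
  simp only [Finset.card_filter]
  rw [Finset.sum_comm]
  refine Finset.sum_congr rfl fun S _ => ?_
  rw [← Finset.card_filter, count_tuples]

end DRCaux

theorem stmt_5 {V : Type*} [Fintype V] [DecidableEq V] (G : SimpleGraph V)
    [DecidableRel G.Adj] (a d m n r t : ℕ)
    (ha : 0 < a) (hd : 0 < d) (hm : 0 < m) (hn : 0 < n) (hr : 0 < r) (ht : 0 < t)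
    (hcard : Fintype.card V = n) (havg : d * n = 2 * G.edgeFinset.card)
    (hcond : (a : ℝ) ≤ (d : ℝ) ^ t / (n : ℝ) ^ (t - 1) - (n : ℝ) ^ r * ((m : ℝ) / n) ^ t) :
    ∃ U : Finset V, a ≤ U.card ∧ ∀ S ⊆ U, S.card = r →
      m ≤ (Finset.univ.filter (fun v => ∀ u ∈ S, G.Adj u v)).card := by
  classical
  have hV : Nonempty V := Fintype.card_pos_iff.mp (hcard ▸ hn)
  have hn0 : (0 : ℝ) < (n : ℝ) := by exact_mod_cast hn
  set bad : Finset (Finset V) :=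
    (Finset.univ.powersetCard r).filter (fun S => (DRCaux.CN G S).card < m) with hbad
  -- degree sum
  have hdeg : ∑ v : V, G.degree v = d * n := by
    rw [SimpleGraph.sum_degrees_eq_twice_card_edges, ← havg]
  -- Jensen / power mean inequality
  have hnt : (n : ℝ) ^ t = (n : ℝ) ^ (t - 1) * n := by
    rw [← pow_succ, Nat.sub_add_cancel ht]
  have jensen : (d : ℝ) ^ t * n ≤ ∑ v : V, (G.degree v : ℝ) ^ t := by
    have h := pow_sum_div_card_le_sum_pow (s := Finset.univ)
      (f := fun v : V => (G.degree v : ℝ)) (fun i _ => by positivity) (t - 1)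
    rw [Nat.sub_add_cancel ht] at h
    have hsum : ∑ v : V, (G.degree v : ℝ) = (d : ℝ) * n := by
      rw [← Nat.cast_sum, hdeg]; push_cast; ring
    rw [hsum, Finset.card_univ, hcard] at h
    have heq : ((d : ℝ) * n) ^ t / (n : ℝ) ^ (t - 1) = (d : ℝ) ^ t * n := by
      rw [mul_pow, hnt]
      field_simp
    rwa [heq] at h
  -- bound on number of bad sets
  have hbadcard : bad.card ≤ n ^ r := by
    calc bad.card ≤ (Finset.univ.powersetCard r : Finset (Finset V)).card :=
          Finset.card_filter_le _ _
      _ = (Fintype.card V).choose r := by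
          rw [Finset.card_powersetCard, Finset.card_univ]
      _ = n.choose r := by rw [hcard]
      _ ≤ n ^ r := Nat.choose_le_pow _ _
  have hbadsum : ∑ S ∈ bad, ((DRCaux.CN G S).card : ℝ) ^ t ≤ (n : ℝ) ^ r * (m : ℝ) ^ t := by
    calc ∑ S ∈ bad, ((DRCaux.CN G S).card : ℝ) ^ t ≤ ∑ _S ∈ bad, (m : ℝ) ^ t := by
          refine Finset.sum_le_sum fun S hS => ?_
          have hlt : (DRCaux.CN G S).card < m := (Finset.mem_filter.mp hS).2
          have h1 : ((DRCaux.CN G S).card : ℝ) ≤ (m : ℝ) := by exact_mod_cast hlt.le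
          exact pow_le_pow_left₀ (by positivity) h1 t
      _ = (bad.card : ℝ) * (m : ℝ) ^ t := by rw [Finset.sum_const, nsmul_eq_mul]
      _ ≤ (n : ℝ) ^ r * (m : ℝ) ^ t := by
          have : (bad.card : ℝ) ≤ (n : ℝ) ^ r := by exact_mod_cast hbadcard
          exact mul_le_mul_of_nonneg_right this (by positivity)
  -- main averaging step
  have key : ∃ w : Fin t → V, (a : ℝ) ≤
      ((DRCaux.A G w).card : ℝ) - ((bad.filter (· ⊆ DRCaux.A G w)).card : ℝ) := by
    have e1 : ∑ w : Fin t → V, ((DRCaux.A G w).card : ℝ) = ∑ v : V, (G.degree v : ℝ) ^ t := by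
      rw [← Nat.cast_sum, DRCaux.sumA]; push_cast; ring
    have e2 : ∑ w : Fin t → V, ((bad.filter (· ⊆ DRCaux.A G w)).card : ℝ) =
        ∑ S ∈ bad, ((DRCaux.CN G S).card : ℝ) ^ t := by
      rw [← Nat.cast_sum, DRCaux.sumBad]; push_cast; ring
    have hc : (a : ℝ) * (n : ℝ) ^ t ≤ (d : ℝ) ^ t * n - (n : ℝ) ^ r * (m : ℝ) ^ t := by
      have h := mul_le_mul_of_nonneg_right hcond (le_of_lt (pow_pos hn0 t))
      have heq : ((d : ℝ) ^ t / (n : ℝ) ^ (t - 1) - (n : ℝ) ^ r * ((m : ℝ) / n) ^ t)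
          * (n : ℝ) ^ t = (d : ℝ) ^ t * n - (n : ℝ) ^ r * (m : ℝ) ^ t := by
        rw [sub_mul, div_pow, hnt]
        field_simp
      rwa [heq] at h
    have hsum : ∑ w : Fin t → V, (a : ℝ) ≤
        ∑ w : Fin t → V, (((DRCaux.A G w).card : ℝ) -
          ((bad.filter (· ⊆ DRCaux.A G w)).card : ℝ)) := by
      rw [Finset.sum_sub_distrib, e1, e2, Finset.sum_const, Finset.card_univ,
        Fintype.card_pi_const, hcard, nsmul_eq_mul]
      push_cast
      linarith [jensen, hbadsum]
    obtain ⟨w, _, hw⟩ := Finset.exists_le_of_sum_le Finset.univ_nonempty hsum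
    exact ⟨w, hw⟩
  obtain ⟨w, hw⟩ := key
  set B : Finset (Finset V) := bad.filter (· ⊆ DRCaux.A G w) with hB
  -- pick one vertex from each bad set
  set g : Finset V → V := fun S => if h : S.Nonempty then h.choose else Classical.arbitrary V
    with hg
  have hgmem : ∀ S ∈ B, g S ∈ S := by
    intro S hS
    have hrS : S.card = r := by
      have := (Finset.mem_filter.mp ((Finset.mem_filter.mp hS).1)).1
      exact (Finset.mem_powersetCard.mp this).2
    have hne : S.Nonempty := Finset.card_pos.mp (by omega)
    simp only [hg, dif_pos hne]
    exact hne.choose_spec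
  set del : Finset V := B.image g with hdel
  refine ⟨DRCaux.A G w \ del, ?_, ?_⟩
  · -- cardinality
    have h1 : a + B.card ≤ (DRCaux.A G w).card := by
      have : (a : ℝ) + (B.card : ℝ) ≤ ((DRCaux.A G w).card : ℝ) := by
        rw [hB]; linarith [hw]
      exact_mod_cast this
    have h2 : del.card ≤ B.card := Finset.card_image_le
    have h3 : (DRCaux.A G w).card - del.card ≤ ((DRCaux.A G w) \ del).card :=
      Finset.le_card_sdiff _ _
    omega
  · -- common neighborhood property
    intro S hSU hScard
    by_contra hcon
    push_neg at hcon
    have hSA : S ⊆ DRCaux.A G w := hSU.trans (Finset.sdiff_subset)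
    have hSB : S ∈ B := by
      rw [hB, Finset.mem_filter, hbad, Finset.mem_filter, Finset.mem_powersetCard]
      exact ⟨⟨⟨Finset.subset_univ S, hScard⟩, hcon⟩, hSA⟩
    have h1 : g S ∈ del := Finset.mem_image_of_mem g hSB
    have h2 : g S ∈ S := hgmem S hSB
    have h3 : g S ∈ DRCaux.A G w \ del := hSU h2
    exact (Finset.mem_sdiff.mp h3).2 h1
end

section
/- Let r ≥ 1 be an integer and 0 < δ < 1 be real. Let G be a graph on n vertices with at least n^{2-(1-δ)/⌈(r-δ)/(1-δ)⌉} edges. Then G contains a subset U of at least n^δ vertices such that every r vertices in U have at least n^δ common neighbors. -/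
open Finset

set_option maxRecDepth 10000
set_option maxHeartbeats 1000000

theorem stmt_6 (r : ℕ) (hr : 1 ≤ r) (δ : ℝ) (hδ0 : 0 < δ) (hδ1 : δ < 1) :
    ∃ n0 : ℕ, ∀ n ≥ n0, ∀ G : SimpleGraph (Fin n),
      (n : ℝ) ^ (2 - (1 - δ) / (⌈((r : ℝ) - δ) / (1 - δ)⌉ : ℝ)) ≤ G.edgeSet.ncard →
      ∃ U : Finset (Fin n), (n : ℝ) ^ δ ≤ U.card ∧
        ∀ S ⊆ U, S.card = r →
          (n : ℝ) ^ δ ≤ ({v : Fin n | ∀ u ∈ S, G.Adj u v}.ncard : ℝ) := by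
  classical
  refine ⟨1, fun n hn G hE => ?_⟩
  have h1δ : (0:ℝ) < 1 - δ := by linarith
  have hr1 : (1:ℝ) ≤ (r:ℝ) := by exact_mod_cast hr
  have hrδ : (0:ℝ) < (r:ℝ) - δ := by linarith
  set T : ℤ := ⌈((r:ℝ) - δ) / (1 - δ)⌉ with hTdef
  have hTpos : 0 < T := Int.ceil_pos.2 (by positivity)
  set t : ℕ := T.toNat with htdef
  have htT : (t:ℝ) = (T:ℝ) := by exact_mod_cast Int.toNat_of_nonneg hTpos.le
  have ht1 : 1 ≤ t := by omega
  have ht0R : (0:ℝ) < t := by exact_mod_cast ht1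
  have htle : (r:ℝ) - δ ≤ (t:ℝ) * (1 - δ) := by
    rw [htT]
    have h := Int.le_ceil (((r:ℝ) - δ) / (1 - δ))
    rw [div_le_iff₀ h1δ] at h
    linarith
  have hn1 : 1 ≤ n := hn
  have hn0R : (0:ℝ) < n := by exact_mod_cast hn1
  have hn1R : (1:ℝ) ≤ n := by exact_mod_cast hn1
  set m : ℝ := (n:ℝ) ^ δ with hmdef
  have hm0 : 0 ≤ m := Real.rpow_nonneg hn0R.le δ
  -- common neighborhood of a set
  set N : Finset (Fin n) → Finset (Fin n) :=
    fun S => univ.filter (fun v => ∀ u ∈ S, G.Adj u v) with hNdef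
  -- common neighborhood of a tuple
  set A : (Fin t → Fin n) → Finset (Fin n) :=
    fun w => univ.filter (fun v => ∀ i, G.Adj (w i) v) with hAdef
  set BadAll : Finset (Finset (Fin n)) :=
    (univ.powersetCard r).filter (fun S => ((N S).card : ℝ) < m) with hBAdef
  set Bad : (Fin t → Fin n) → Finset (Finset (Fin n)) :=
    fun w => BadAll.filter (fun S => S ⊆ A w) with hBdef
  -- key identity 1
  have key1 : ∑ w : Fin t → Fin n, ((A w).card : ℕ)
      = ∑ v : Fin n, ((univ.filter (fun u => G.Adj u v)).card : ℕ) ^ t := by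
    calc ∑ w : Fin t → Fin n, (A w).card
        = ∑ w : Fin t → Fin n, ∑ v : Fin n, if (∀ i, G.Adj (w i) v) then 1 else 0 :=
          Finset.sum_congr rfl (fun w _ => Finset.card_filter _ _)
      _ = ∑ v : Fin n, ∑ w : Fin t → Fin n, if (∀ i, G.Adj (w i) v) then 1 else 0 :=
          Finset.sum_comm
      _ = ∑ v : Fin n, (univ.filter (fun w : Fin t → Fin n => ∀ i, G.Adj (w i) v)).card :=
          Finset.sum_congr rfl (fun v _ => (Finset.card_filter _ _).symm)
      _ = ∑ v : Fin n, ((univ.filter (fun u => G.Adj u v)).card) ^ t := by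
          refine Finset.sum_congr rfl (fun v _ => ?_)
          have he : (univ.filter (fun w : Fin t → Fin n => ∀ i, G.Adj (w i) v))
              = Fintype.piFinset (fun _ : Fin t => univ.filter (fun u => G.Adj u v)) := by
            ext w; simp [Fintype.mem_piFinset]
          rw [he, Fintype.card_piFinset]
          simp
  -- key identity 2
  have key2 : ∑ w : Fin t → Fin n, ((Bad w).card : ℕ)
      = ∑ S ∈ BadAll, ((N S).card) ^ t := by
    calc ∑ w : Fin t → Fin n, (Bad w).card
        = ∑ w : Fin t → Fin n, ∑ S ∈ BadAll, if S ⊆ A w then 1 else 0 :=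
          Finset.sum_congr rfl (fun w _ => Finset.card_filter _ _)
      _ = ∑ S ∈ BadAll, ∑ w : Fin t → Fin n, if S ⊆ A w then 1 else 0 :=
          Finset.sum_comm
      _ = ∑ S ∈ BadAll, (univ.filter (fun w : Fin t → Fin n => S ⊆ A w)).card :=
          Finset.sum_congr rfl (fun S _ => (Finset.card_filter _ _).symm)
      _ = ∑ S ∈ BadAll, ((N S).card) ^ t := by
          refine Finset.sum_congr rfl (fun S _ => ?_)
          have he : (univ.filter (fun w : Fin t → Fin n => S ⊆ A w))
              = Fintype.piFinset (fun _ : Fin t => N S) := by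
            ext w
            simp only [Finset.mem_filter, Finset.mem_univ, true_and,
              Fintype.mem_piFinset, hNdef, hAdef, Finset.subset_iff]
            constructor
            · intro h i u hu
              exact (h hu i).symm
            · intro h v hv i
              exact (h i v hv).symm
          rw [he, Fintype.card_piFinset]
          simp
  -- lower bound on sum of |A w|
  have hEcard : ((n : ℝ) ^ (2 - (1 - δ) / (t:ℝ))) ≤ (G.edgeFinset.card : ℝ) := by
    rw [htT]
    rw [SimpleGraph.edgeFinset, ← Set.ncard_eq_toFinset_card']
    exact hE
  have hdeg : ∀ v : Fin n, (univ.filter (fun u => G.Adj u v)).card = G.degree v := by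
    intro v
    rw [← SimpleGraph.card_neighborFinset_eq_degree]
    congr 1
    ext u
    simp [G.adj_comm]
  have hhand : ∑ v : Fin n, ((univ.filter (fun u => G.Adj u v)).card : ℝ)
      = 2 * (G.edgeFinset.card : ℝ) := by
    push_cast [hdeg]
    exact_mod_cast congrArg (Nat.cast (R := ℝ)) G.sum_degrees_eq_twice_card_edges
  have hB1 : (2:ℝ) ^ t * (n:ℝ) ^ ((t:ℝ) + δ) ≤ ∑ w : Fin t → Fin n, ((A w).card : ℝ) := by
    have hcast : ∑ w : Fin t → Fin n, ((A w).card : ℝ)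
        = ∑ v : Fin n, ((univ.filter (fun u => G.Adj u v)).card : ℝ) ^ t := by
      exact_mod_cast congrArg (Nat.cast (R := ℝ)) key1
    rw [hcast]
    have hpm := pow_sum_div_card_le_sum_pow
      (f := fun v : Fin n => ((univ.filter (fun u => G.Adj u v)).card : ℝ))
      (s := univ) (fun i _ => by positivity) (t - 1)
    rw [Nat.sub_add_cancel ht1] at hpm
    refine le_trans ?_ hpm
    rw [hhand, Finset.card_univ, Fintype.card_fin]
    -- (2 * E)^t / n^(t-1) ≥ 2^t * n^(t+δ)
    have hnpow : ((n:ℝ)) ^ (t - 1) = (n:ℝ) ^ ((t:ℝ) - 1) := by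
      rw [← Real.rpow_natCast (n:ℝ) (t-1)]
      congr 1
      push_cast [Nat.cast_sub ht1]
      ring
    rw [hnpow, le_div_iff₀ (by positivity)]
    have h2E : (2:ℝ) * (n:ℝ) ^ (2 - (1 - δ) / (t:ℝ)) ≤ 2 * (G.edgeFinset.card : ℝ) := by
      linarith
    calc (2:ℝ) ^ t * (n:ℝ) ^ ((t:ℝ) + δ) * (n:ℝ) ^ ((t:ℝ) - 1)
        = 2 ^ t * (n:ℝ) ^ (((t:ℝ) + δ) + ((t:ℝ) - 1)) := by
          rw [Real.rpow_add hn0R ((t:ℝ)+δ) ((t:ℝ)-1)]; ring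
      _ = (2 * (n:ℝ) ^ (2 - (1 - δ) / (t:ℝ))) ^ t := by
          rw [mul_pow, ← Real.rpow_natCast ((n:ℝ) ^ (2 - (1 - δ) / (t:ℝ))) t,
            ← Real.rpow_mul hn0R.le]
          congr 1
          field_simp
          ring
      _ ≤ (2 * (G.edgeFinset.card : ℝ)) ^ t := by
          refine pow_le_pow_left₀ (by positivity) h2E t
  -- upper bound on sum of |Bad w|
  have hB2 : ∑ w : Fin t → Fin n, ((Bad w).card : ℝ) ≤ (n:ℝ) ^ ((r:ℝ) + δ * t) := by
    have hcast : ∑ w : Fin t → Fin n, ((Bad w).card : ℝ)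
        = ∑ S ∈ BadAll, ((N S).card : ℝ) ^ t := by
      exact_mod_cast congrArg (Nat.cast (R := ℝ)) key2
    rw [hcast]
    have hterm : ∀ S ∈ BadAll, ((N S).card : ℝ) ^ t ≤ m ^ t := by
      intro S hS
      rw [hBAdef, Finset.mem_filter] at hS
      exact pow_le_pow_left₀ (by positivity) hS.2.le t
    calc ∑ S ∈ BadAll, ((N S).card : ℝ) ^ t ≤ ∑ _S ∈ BadAll, m ^ t :=
          Finset.sum_le_sum hterm
      _ = (BadAll.card : ℝ) * m ^ t := by rw [Finset.sum_const]; ring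
      _ ≤ ((n:ℝ) ^ (r:ℕ)) * m ^ t := by
          refine mul_le_mul_of_nonneg_right ?_ (by positivity)
          have h2 : (univ.powersetCard r (α := Fin n)).card = Nat.choose n r := by
            simp [Finset.card_powersetCard]
          have h3 : BadAll.card ≤ n ^ r := by
            calc BadAll.card ≤ (univ.powersetCard r (α := Fin n)).card :=
                  Finset.card_le_card (Finset.filter_subset _ _)
              _ = Nat.choose n r := h2
              _ ≤ n ^ r := Nat.choose_le_pow n r
          exact_mod_cast h3
      _ = (n:ℝ) ^ ((r:ℝ) + δ * t) := by
          rw [hmdef, ← Real.rpow_natCast (n:ℝ) r, ← Real.rpow_natCast ((n:ℝ) ^ δ) t,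
            ← Real.rpow_mul hn0R.le, ← Real.rpow_add hn0R]
  -- combine to get a good tuple
  have hexp : (r:ℝ) + δ * t ≤ (t:ℝ) + δ := by nlinarith
  have hsum : ∑ w : Fin t → Fin n, m
      ≤ ∑ w : Fin t → Fin n, (((A w).card : ℝ) - ((Bad w).card : ℝ)) := by
    rw [Finset.sum_sub_distrib, Finset.sum_const, Finset.card_univ]
    have hcardfun : (Fintype.card (Fin t → Fin n) : ℝ) = (n:ℝ) ^ (t:ℝ) := by
      rw [Fintype.card_fun, Fintype.card_fin, Fintype.card_fin, Nat.cast_pow]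
      exact (Real.rpow_natCast _ _).symm
    have h2t : (2:ℝ) ≤ 2 ^ t := by
      calc (2:ℝ) = 2 ^ 1 := (pow_one 2).symm
        _ ≤ 2 ^ t := pow_le_pow_right₀ one_le_two ht1
    have hbig : (n:ℝ) ^ (t:ℝ) * m ≤ 2 ^ t * (n:ℝ) ^ ((t:ℝ) + δ) - (n:ℝ) ^ ((r:ℝ) + δ * t) := by
      have e1 : (n:ℝ) ^ ((t:ℝ) + δ) = (n:ℝ) ^ (t:ℝ) * m := by
        rw [hmdef, Real.rpow_add hn0R]
      have e2 : (n:ℝ) ^ ((r:ℝ) + δ * t) ≤ (n:ℝ) ^ ((t:ℝ) + δ) :=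
        Real.rpow_le_rpow_of_exponent_le hn1R hexp
      have e3 : (0:ℝ) < (n:ℝ) ^ ((t:ℝ) + δ) := Real.rpow_pos_of_pos hn0R _
      nlinarith
    rw [nsmul_eq_mul, hcardfun]
    linarith [hB1, hB2]
  have hnonempty : (univ : Finset (Fin t → Fin n)).Nonempty := by
    have : Nonempty (Fin n) := ⟨⟨0, hn1⟩⟩
    exact Finset.univ_nonempty
  obtain ⟨w, -, hw⟩ := Finset.exists_le_of_sum_le hnonempty hsum
  -- build U
  set pick : Finset (Fin n) → Fin n :=
    fun S => if h : S.Nonempty then h.choose else ⟨0, hn1⟩ with hpickdef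
  have hpickmem : ∀ S : Finset (Fin n), S.Nonempty → pick S ∈ S := by
    intro S hS
    rw [hpickdef]
    simp only [dif_pos hS]
    exact hS.choose_spec
  refine ⟨A w \ (Bad w).image pick, ?_, ?_⟩
  · have h1 : (A w).card ≤ (A w \ (Bad w).image pick).card + ((Bad w).image pick).card :=
      Finset.card_le_card_sdiff_add_card
    have h2 : ((Bad w).image pick).card ≤ (Bad w).card := Finset.card_image_le
    have h3 : ((A w).card : ℝ) ≤ ((A w \ (Bad w).image pick).card : ℝ) + ((Bad w).card : ℝ) := by
      exact_mod_cast le_trans h1 (by omega)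
    linarith
  · intro S hSU hScard
    by_contra hcon
    push_neg at hcon
    have hNS : ({v : Fin n | ∀ u ∈ S, G.Adj u v}.ncard : ℝ) = ((N S).card : ℝ) := by
      congr 1
      rw [hNdef]
      rw [Set.ncard_eq_toFinset_card']
      congr 1
      ext v
      simp
    rw [hNS] at hcon
    have hSBadAll : S ∈ BadAll := by
      rw [hBAdef, Finset.mem_filter, Finset.mem_powersetCard]
      exact ⟨⟨Finset.subset_univ S, hScard⟩, hcon⟩
    have hSA : S ⊆ A w := hSU.trans (Finset.sdiff_subset)
    have hSBad : S ∈ Bad w := by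
      rw [hBdef, Finset.mem_filter]
      exact ⟨hSBadAll, hSA⟩
    have hSne : S.Nonempty := by
      rw [← Finset.card_pos, hScard]; exact hr
    have hpS : pick S ∈ S := hpickmem S hSne
    have hpU : pick S ∈ A w \ (Bad w).image pick := hSU hpS
    have hpim : pick S ∈ (Bad w).image pick := Finset.mem_image_of_mem pick hSBad
    rw [Finset.mem_sdiff] at hpU
    exact hpU.2 hpim
end

section
/- Let s ≥ r ≥ 1 be integers and 0 < δ < 1. Suppose G is a K_{s+r}-free graph on n vertices containing a subset U of size at least n^δ such that every r vertices of U have at least n^δ common neighbors. Then α_s(G) ≥ n^δ. -/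
open Classical in
/-- The `s`-independence number: the maximum number of vertices of an induced
`K_s`-free subgraph of `G`. -/
noncomputable def alphaS {V : Type*} [Fintype V] (G : SimpleGraph V) (s : ℕ) : ℕ :=
  ((Finset.univ : Finset (Finset V)).filter
    (fun A : Finset V => (G.induce (A : Set V)).CliqueFree s)).sup Finset.card

lemma induce_cliqueFree_iff {V : Type*} (G : SimpleGraph V) (A : Set V) (n : ℕ) :
    (G.induce A).CliqueFree n ↔ G.CliqueFreeOn A n := by
  constructor
  · intro h t hta ht
    refine h ((t.attach.map ⟨fun x => (⟨x.1, hta x.2⟩ : A), ?_⟩)) ⟨?_, ?_⟩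
    · intro a b hab
      have h := congrArg Subtype.val hab
      exact Subtype.ext h
    · rintro ⟨x, hx⟩ hxmem ⟨y, hy⟩ hymem hxy
      simp only [SimpleGraph.comap_adj, Function.Embedding.coe_subtype]
      exact ht.1 (by obtain ⟨⟨a, ha⟩, _, he⟩ := Finset.mem_map.1 hxmem; have h : a = x := congrArg Subtype.val he; exact h ▸ ha) (by obtain ⟨⟨a, ha⟩, _, he⟩ := Finset.mem_map.1 hymem; have h : a = y := congrArg Subtype.val he; exact h ▸ ha) (by simpa [Subtype.ext_iff] using hxy)
    · simpa using ht.2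
  · intro h t ht
    refine h (t := t.map ⟨Subtype.val, Subtype.val_injective⟩) ?_ ⟨?_, ?_⟩
    · intro x hx
      simp only [Finset.coe_map, Set.mem_image] at hx
      obtain ⟨⟨y, hy⟩, _, rfl⟩ := hx
      exact hy
    · rintro x hx y hy hxy
      simp only [Finset.coe_map, Set.mem_image, Finset.mem_coe] at hx hy
      obtain ⟨⟨x, hxA⟩, hxm, rfl⟩ := hx
      obtain ⟨⟨y, hyA⟩, hym, rfl⟩ := hy
      exact ht.1 hxm hym (by simpa [Subtype.ext_iff] using hxy)
    · simpa using ht.2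

lemma le_alphaS {V : Type*} [Fintype V] (G : SimpleGraph V) (s : ℕ) (A : Finset V)
    (hA : G.CliqueFreeOn (A : Set V) s) : A.card ≤ alphaS G s := by
  classical
  apply Finset.le_sup (f := Finset.card)
  simp only [Finset.mem_filter, Finset.mem_univ, true_and]
  exact (induce_cliqueFree_iff G A s).2 hA

theorem stmt_7 {V : Type*} [Fintype V] (G : SimpleGraph V) (s r : ℕ) (δ : ℝ)
    (hr : 1 ≤ r) (hrs : r ≤ s) (hδ0 : 0 < δ) (hδ1 : δ < 1)
    (hG : G.CliqueFree (s + r))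
    (U : Finset V) (hU : (Fintype.card V : ℝ) ^ δ ≤ U.card)
    (hcommon : ∀ S ⊆ U, S.card = r →
      (Fintype.card V : ℝ) ^ δ ≤ ({v : V | ∀ u ∈ S, G.Adj u v}.ncard : ℝ)) :
    (Fintype.card V : ℝ) ^ δ ≤ alphaS G s := by
  classical
  by_cases hUfree : G.CliqueFreeOn (U : Set V) s
  · exact hU.trans (by exact_mod_cast le_alphaS G s U hUfree)
  · -- there is an s-clique K inside U
    simp only [SimpleGraph.CliqueFreeOn, not_forall, Classical.not_not] at hUfree
    obtain ⟨K, hKU, hK⟩ := hUfree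
    -- pick r vertices W of K
    obtain ⟨W, hWK, hWcard⟩ := Finset.exists_subset_card_eq (hK.2 ▸ hrs)
    have hWU : W ⊆ U := fun x hx => hKU (hWK hx)
    set N : Set V := {v : V | ∀ u ∈ W, G.Adj u v} with hN
    have hNcard := hcommon W hWU hWcard
    -- N induces a K_s-free subgraph
    have hNfin : N.Finite := Set.toFinite N
    have hNfree : G.CliqueFreeOn N s := by
      intro C hCN hC
      -- C ∪ W is an (s+r)-clique
      have hdisj : Disjoint C W := by
        rw [Finset.disjoint_left]
        intro a haC haW
        exact absurd ((hCN haC) a haW) (G.irrefl)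
      refine hG (C ∪ W) ⟨?_, ?_⟩
      · intro x hx y hy hxy
        simp only [Finset.coe_union, Set.mem_union, Finset.mem_coe] at hx hy
        rcases hx with hx | hx <;> rcases hy with hy | hy
        · exact hC.1 hx hy hxy
        · exact ((hCN hx) y hy).symm
        · exact (hCN hy) x hx
        · exact hK.isClique (hWK hx) (hWK hy) hxy
      · rw [Finset.card_union_of_disjoint hdisj, hC.2, hWcard]
    calc (Fintype.card V : ℝ) ^ δ ≤ N.ncard := hNcard
      _ ≤ alphaS G s := by
          rw [Set.ncard_eq_toFinset_card N hNfin]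
          exact_mod_cast le_alphaS G s hNfin.toFinset (by simpa using hNfree)
end

section
/- Let L be a line containing b-r points of a set S in a linear hypergraph (any two vertices lie in at most one common edge) in which S is complete (every pair of points of S lies on a common edge), and let R ⊆ S be a set of r points not on L, where b > r ≥ 1. Then the number of edges L_{u,v} covering pairs {u,v} with u ∈ L ∩ S and v ∈ R, and meeting R in at least 2 points, is at most C(r,2); moreover, the total number of distinct edges covering such pairs is at least r(b-r) - r·C(r,2). -/
theorem stmt_11 {P : Type*} [DecidableEq P] (edges : Finset (Finset P))
    (b r : ℕ) (hr : 1 ≤ r) (hbr : r < b)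
    (hlinear : ∀ E ∈ edges, ∀ E' ∈ edges, ∀ x y : P, x ≠ y →
      x ∈ E → y ∈ E → x ∈ E' → y ∈ E' → E = E')
    (S : Finset P)
    (hcomplete : ∀ x ∈ S, ∀ y ∈ S, x ≠ y → ∃ E ∈ edges, x ∈ E ∧ y ∈ E)
    (L : Finset P) (hL : L ∈ edges) (hLS : (L ∩ S).card = b - r)
    (R : Finset P) (hRS : R ⊆ S) (hRcard : R.card = r) (hRL : ∀ v ∈ R, v ∉ L) :
    ((edges.filter (fun E => (∃ u ∈ L ∩ S, u ∈ E) ∧ 2 ≤ (E ∩ R).card)).card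
        ≤ r.choose 2) ∧
    r * (b - r) - r * r.choose 2 ≤
      (edges.filter (fun E => (∃ u ∈ L ∩ S, u ∈ E) ∧ ∃ v ∈ R, v ∈ E)).card := by
  classical
  set G := edges.filter (fun E => (∃ u ∈ L ∩ S, u ∈ E) ∧ 2 ≤ (E ∩ R).card) with hGdef
  -- the injection for part 1
  have hf : ∀ E ∈ G, ∃ t, t ⊆ E ∩ R ∧ t.card = 2 := by
    intro E hE
    have h2 : 2 ≤ (E ∩ R).card := (Finset.mem_filter.1 hE).2.2
    obtain ⟨t, ht, htc⟩ := Finset.exists_subset_card_eq h2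
    exact ⟨t, ht, htc⟩
  choose f hfsub hfcard using hf
  have part1 : G.card ≤ r.choose 2 := by
    have h := Finset.card_le_card_of_injOn (fun E => if h : E ∈ G then f E h else ∅)
      (s := G) (t := R.powersetCard 2) ?_ ?_
    · simpa [Finset.card_powersetCard, hRcard] using h
    · intro E hE
      simp only [Finset.mem_coe] at hE ⊢
      simp only [hE, dif_pos]
      rw [Finset.mem_powersetCard]
      exact ⟨(hfsub E hE).trans Finset.inter_subset_right, hfcard E hE⟩
    · intro E hE E' hE' heq
      simp only [Finset.mem_coe] at hE hE'
      simp only [hE, hE', dif_pos] at heq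
      have h2 : 1 < (f E hE).card := by rw [hfcard]; norm_num
      obtain ⟨x, hx, y, hy, hxy⟩ := Finset.one_lt_card.1 h2
      have hxE : x ∈ E := Finset.inter_subset_left (hfsub E hE hx)
      have hyE : y ∈ E := Finset.inter_subset_left (hfsub E hE hy)
      have hxE' : x ∈ E' := Finset.inter_subset_left (hfsub E' hE' (heq ▸ hx))
      have hyE' : y ∈ E' := Finset.inter_subset_left (hfsub E' hE' (heq ▸ hy))
      exact hlinear E (Finset.mem_filter.1 hE).1 E' (Finset.mem_filter.1 hE').1
        x y hxy hxE hyE hxE' hyE'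
  refine ⟨part1, ?_⟩
  set F := edges.filter (fun E => (∃ u ∈ L ∩ S, u ∈ E) ∧ ∃ v ∈ R, v ∈ E) with hFdef
  -- each E in F meets L∩S in at most one point
  have hone : ∀ E ∈ F, (E ∩ (L ∩ S)).card ≤ 1 := by
    intro E hE
    rw [Finset.card_le_one]
    intro x hx y hy
    by_contra hxy
    have hEedge : E ∈ edges := (Finset.mem_filter.1 hE).1
    have hEL : E = L := hlinear E hEedge L hL x y hxy
      (Finset.mem_of_mem_inter_left hx) (Finset.mem_of_mem_inter_left hy)
      (Finset.mem_of_mem_inter_left (Finset.mem_of_mem_inter_right hx))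
      (Finset.mem_of_mem_inter_left (Finset.mem_of_mem_inter_right hy))
    obtain ⟨v, hvR, hvE⟩ := (Finset.mem_filter.1 hE).2.2
    exact hRL v hvR (hEL ▸ hvE)
  -- covering of all pairs
  have hcover : ((L ∩ S) ×ˢ R) ⊆ F.biUnion (fun E => (E ∩ (L ∩ S)) ×ˢ (E ∩ R)) := by
    intro p hp
    rw [Finset.mem_product] at hp
    obtain ⟨hu, hv⟩ := hp
    have huS : p.1 ∈ S := Finset.mem_of_mem_inter_right hu
    have huL : p.1 ∈ L := Finset.mem_of_mem_inter_left hu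
    have hne : p.1 ≠ p.2 := by intro h; exact hRL p.2 hv (h ▸ huL)
    obtain ⟨E, hEe, huE, hvE⟩ := hcomplete p.1 huS p.2 (hRS hv) hne
    rw [Finset.mem_biUnion]
    refine ⟨E, ?_, ?_⟩
    · rw [hFdef, Finset.mem_filter]
      exact ⟨hEe, ⟨p.1, hu, huE⟩, ⟨p.2, hv, hvE⟩⟩
    · rw [Finset.mem_product]
      exact ⟨Finset.mem_inter.2 ⟨huE, hu⟩, Finset.mem_inter.2 ⟨hvE, hv⟩⟩
  have hcount : r * (b - r) ≤ ∑ E ∈ F, (E ∩ R).card := by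
    calc r * (b - r) = ((L ∩ S) ×ˢ R).card := by
          rw [Finset.card_product, hLS, hRcard, Nat.mul_comm]
      _ ≤ (F.biUnion (fun E => (E ∩ (L ∩ S)) ×ˢ (E ∩ R))).card :=
          Finset.card_le_card hcover
      _ ≤ ∑ E ∈ F, ((E ∩ (L ∩ S)) ×ˢ (E ∩ R)).card := Finset.card_biUnion_le
      _ ≤ ∑ E ∈ F, (E ∩ R).card := by
          apply Finset.sum_le_sum
          intro E hE
          rw [Finset.card_product]
          calc (E ∩ (L ∩ S)).card * (E ∩ R).card ≤ 1 * (E ∩ R).card :=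
                Nat.mul_le_mul_right _ (hone E hE)
            _ = (E ∩ R).card := one_mul _
  -- split the sum
  have hsplit : ∑ E ∈ F, (E ∩ R).card ≤ r * r.choose 2 + F.card := by
    rw [← Finset.sum_filter_add_sum_filter_not F (fun E => 2 ≤ (E ∩ R).card)]
    have h1 : ∑ E ∈ F.filter (fun E => 2 ≤ (E ∩ R).card), (E ∩ R).card
        ≤ r * r.choose 2 := by
      calc ∑ E ∈ F.filter (fun E => 2 ≤ (E ∩ R).card), (E ∩ R).card
          ≤ ∑ _E ∈ F.filter (fun E => 2 ≤ (E ∩ R).card), r := by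
            apply Finset.sum_le_sum
            intro E _
            calc (E ∩ R).card ≤ R.card := Finset.card_le_card Finset.inter_subset_right
              _ = r := hRcard
        _ = (F.filter (fun E => 2 ≤ (E ∩ R).card)).card * r := by
            rw [Finset.sum_const, smul_eq_mul]
        _ ≤ r.choose 2 * r := by
            apply Nat.mul_le_mul_right
            refine le_trans (Finset.card_le_card ?_) part1
            intro E hE
            rw [Finset.mem_filter] at hE ⊢
            obtain ⟨hEF, h2⟩ := hE
            rw [hFdef, Finset.mem_filter] at hEF
            exact ⟨hEF.1, hEF.2.1, h2⟩
        _ = r * r.choose 2 := Nat.mul_comm _ _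
    have h2 : ∑ E ∈ F.filter (fun E => ¬ 2 ≤ (E ∩ R).card), (E ∩ R).card
        ≤ F.card := by
      calc ∑ E ∈ F.filter (fun E => ¬ 2 ≤ (E ∩ R).card), (E ∩ R).card
          ≤ ∑ _E ∈ F.filter (fun E => ¬ 2 ≤ (E ∩ R).card), 1 := by
            apply Finset.sum_le_sum
            intro E hE
            have := (Finset.mem_filter.1 hE).2
            omega
        _ = (F.filter (fun E => ¬ 2 ≤ (E ∩ R).card)).card := by
            rw [Finset.sum_const, smul_eq_mul, mul_one]
        _ ≤ F.card := Finset.card_le_card (Finset.filter_subset _ _)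
    omega
  omega
end

section
/- In a generalized quadrangle of order (p,q), no three lines pairwise intersect in three distinct points (no triangle of lines). Consequently, any graph obtained by placing, on each line, a complete s-partite graph (for any partition of the points of that line into s classes) and taking the union over all lines, is K_{s+1}-free. -/
theorem stmt_14 {P : Type*} [Fintype P] [DecidableEq P] (p q s : ℕ) (hs : 1 ≤ s)
    (lines : Finset (Finset P))
    (hunique : ∀ L ∈ lines, ∀ L' ∈ lines, ∀ x y : P, x ≠ y →
      x ∈ L → y ∈ L → x ∈ L' → y ∈ L' → L = L')
    (hgq : ∀ u : P, ∀ L ∈ lines, u ∉ L →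
      ∃! w, w ∈ L ∧ ∃ M ∈ lines, u ∈ M ∧ w ∈ M)
    (hlinecard : ∀ L ∈ lines, L.card = p + 1)
    (hpointcard : ∀ x : P, (lines.filter (fun L => x ∈ L)).card = q + 1)
    (χ : Finset P → P → Fin s)
    (G : SimpleGraph P)
    (hG : ∀ x y : P, G.Adj x y ↔
      (x ≠ y ∧ ∃ L ∈ lines, x ∈ L ∧ y ∈ L ∧ χ L x ≠ χ L y)) :
    (∀ L₁ ∈ lines, ∀ L₂ ∈ lines, ∀ L₃ ∈ lines,
      L₁ ≠ L₂ → L₂ ≠ L₃ → L₁ ≠ L₃ →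
      ∀ x y z : P, x ≠ y → y ≠ z → x ≠ z →
        x ∈ L₁ → x ∈ L₂ → y ∈ L₂ → y ∈ L₃ → z ∈ L₃ → z ∈ L₁ → False) ∧
    G.CliqueFree (s + 1) := by
  have part1 : (∀ L₁ ∈ lines, ∀ L₂ ∈ lines, ∀ L₃ ∈ lines,
      L₁ ≠ L₂ → L₂ ≠ L₃ → L₁ ≠ L₃ →
      ∀ x y z : P, x ≠ y → y ≠ z → x ≠ z →
        x ∈ L₁ → x ∈ L₂ → y ∈ L₂ → y ∈ L₃ → z ∈ L₃ → z ∈ L₁ → False) := by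
    intro L₁ h1 L₂ h2 L₃ h3 h12 h23 h13 x y z hxy hyz hxz hxL1 hxL2 hyL2 hyL3 hzL3 hzL1
    have hxL3 : x ∉ L₃ := fun hx =>
      h23 (hunique L₂ h2 L₃ h3 x y hxy hxL2 hyL2 hx hyL3)
    obtain ⟨w, hw, huniq⟩ := hgq x L₃ h3 hxL3
    have hy : y = w := huniq y ⟨hyL3, L₂, h2, hxL2, hyL2⟩
    have hz : z = w := huniq z ⟨hzL3, L₁, h1, hxL1, hzL1⟩
    exact hyz (hy.trans hz.symm)
  refine ⟨part1, ?_⟩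
  intro t ht
  have hcard := ht.2
  have h2 : 1 < t.card := by omega
  obtain ⟨x, hx, y, hy, hxy⟩ := Finset.one_lt_card.mp h2
  have hadjxy := ht.1 hx hy hxy
  rw [hG] at hadjxy
  obtain ⟨-, L, hL, hxL, hyL, -⟩ := hadjxy
  have hall : ∀ z ∈ t, z ∈ L := by
    intro z hz
    by_cases hzx : z = x
    · exact hzx ▸ hxL
    by_cases hzy : z = y
    · exact hzy ▸ hyL
    have haxz := ht.1 hx hz (Ne.symm hzx)
    rw [hG] at haxz
    obtain ⟨-, M, hM, hxM, hzM, -⟩ := haxz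
    have hayz := ht.1 hy hz (Ne.symm hzy)
    rw [hG] at hayz
    obtain ⟨-, N, hN, hyN, hzN, -⟩ := hayz
    by_contra hzL
    have hML : M ≠ L := fun h => hzL (h ▸ hzM)
    have hLN : L ≠ N := fun h => hzL (h.symm ▸ hzN)
    have hMN : M ≠ N := fun h =>
      hML (hunique M hM L hL x y hxy hxM (h.symm ▸ hyN) hxL hyL)
    exact part1 M hM L hL N hN hML hLN hMN x y z hxy
      (fun h => hzy h.symm) (fun h => hzx h.symm) hxM hxL hyL hyN hzN hzM
  have hinj : Set.InjOn (χ L) t := by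
    intro a ha b hb hab
    by_contra hne
    have hadj := ht.1 ha hb hne
    rw [hG] at hadj
    obtain ⟨-, L', hL', haL', hbL', hχ⟩ := hadj
    have hLL : L' = L := hunique L' hL' L hL a b hne haL' hbL' (hall a ha) (hall b hb)
    exact hχ (hLL ▸ hab)
  have hle : t.card ≤ (Finset.univ : Finset (Fin s)).card :=
    Finset.card_le_card_of_injOn (χ L) (fun a _ => Finset.mem_univ _) hinj
  simp only [Finset.card_univ, Fintype.card_fin] at hle
  omega
end

section
/- Let s ≥ 2 and suppose H is a K_{s+1}-free graph on m vertices with α_s(H) < f, and B is a K_{s,s}-free bipartite graph between two disjoint copies of the vertex set of H. Let G be the graph on 2m vertices consisting of two disjoint copies of H together with the edges of B. Then G is K_{2s}-free and α_s(G) < 2f. -/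
lemma clique_card_lt {V : Type*} {G : SimpleGraph V} {n : ℕ} {t : Finset V}
    (ht : G.IsClique t) (hG : G.CliqueFree n) : t.card < n := by
  by_contra h
  push_neg at h
  obtain ⟨u, hu, hcard⟩ := Finset.exists_subset_card_eq h
  exact hG u ⟨ht.subset hu, hcard⟩

open Classical in
lemma card_le_alphaS {V : Type*} [Fintype V] {G : SimpleGraph V} {s : ℕ} {A : Finset V}
    (h : (G.induce (A : Set V)).CliqueFree s) : A.card ≤ alphaS G s :=
  Finset.le_sup (f := Finset.card) (Finset.mem_filter.2 ⟨Finset.mem_univ _, h⟩)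

theorem stmt_16 (s m f : ℕ) (hs : 2 ≤ s)
    (H : SimpleGraph (Fin m)) (hH : H.CliqueFree (s + 1)) (hα : alphaS H s < f)
    (B : Fin m → Fin m → Prop)
    (hB : ¬∃ A A' : Finset (Fin m), A.card = s ∧ A'.card = s ∧
      ∀ x ∈ A, ∀ y ∈ A', B x y)
    (G : SimpleGraph (Bool × Fin m))
    (hG : ∀ u v : Fin m,
      (G.Adj (false, u) (false, v) ↔ H.Adj u v) ∧
      (G.Adj (true, u) (true, v) ↔ H.Adj u v) ∧
      (G.Adj (false, u) (true, v) ↔ B u v)) :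
    G.CliqueFree (2 * s) ∧ alphaS G s < 2 * f := by
  classical
  -- adjacency within a side
  have hside : ∀ (b : Bool) (u v : Fin m), G.Adj (b, u) (b, v) ↔ H.Adj u v := by
    intro b u v
    cases b
    · exact (hG u v).1
    · exact (hG u v).2.1
  -- any clique of G restricted to a side gives a clique of H
  have hcliqueSide : ∀ (b : Bool) (t : Finset (Bool × Fin m)), G.IsClique t →
      H.IsClique ((t.filter (fun p => p.1 = b)).image Prod.snd) := by
    intro b t ht x hx y hy hxy
    simp only [Finset.coe_image, Set.mem_image, Finset.mem_coe, Finset.mem_filter] at hx hy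
    obtain ⟨p, ⟨hpA, hpb⟩, rfl⟩ := hx
    obtain ⟨q, ⟨hqA, hqb⟩, rfl⟩ := hy
    have hp : p = (b, p.2) := by rw [← hpb]
    have hq : q = (b, q.2) := by rw [← hqb]
    have hne : p ≠ q := by
      intro h; exact hxy (by rw [h])
    have := ht hpA hqA hne
    rw [hp, hq] at this
    exact (hside b p.2 q.2).1 this
  have hcardSide : ∀ (b : Bool) (t : Finset (Bool × Fin m)),
      ((t.filter (fun p => p.1 = b)).image Prod.snd).card = (t.filter (fun p => p.1 = b)).card := by
    intro b t
    apply Finset.card_image_of_injOn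
    intro x hx y hy hxy
    simp only [Finset.mem_coe, Finset.mem_filter] at hx hy
    exact Prod.ext (hx.2.trans hy.2.symm) hxy
  constructor
  · -- CliqueFree 2s
    intro t ht
    obtain ⟨htc, htcard⟩ := ht
    have hflip : t.filter (fun p => p.1 = true) = t.filter (fun p => ¬ p.1 = false) :=
      Finset.filter_congr (fun x _ => by simp)
    have hsum : (t.filter (fun p => p.1 = false)).card
        + (t.filter (fun p => p.1 = true)).card = 2 * s := by
      rw [hflip,
        Finset.card_filter_add_card_filter_not
          (s := t) (p := fun p : Bool × Fin m => p.1 = false), htcard]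
    have hf : (((t.filter (fun p => p.1 = false)).image Prod.snd)).card < s + 1 :=
      clique_card_lt (hcliqueSide false t htc) hH
    have htt' : (((t.filter (fun p => p.1 = true)).image Prod.snd)).card < s + 1 :=
      clique_card_lt (hcliqueSide true t htc) hH
    rw [hcardSide] at hf htt'
    have hfs : (t.filter (fun p => p.1 = false)).card = s := by omega
    have hts : (t.filter (fun p => p.1 = true)).card = s := by omega
    apply hB
    refine ⟨(t.filter (fun p => p.1 = false)).image Prod.snd,
      (t.filter (fun p => p.1 = true)).image Prod.snd, ?_, ?_, ?_⟩
    · rw [hcardSide]; exact hfs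
    · rw [hcardSide]; exact hts
    · intro x hx y hy
      simp only [Finset.mem_image, Finset.mem_filter] at hx hy
      obtain ⟨p, ⟨hpA, hpb⟩, rfl⟩ := hx
      obtain ⟨q, ⟨hqA, hqb⟩, rfl⟩ := hy
      have hp : p = (false, p.2) := by rw [← hpb]
      have hq : q = (true, q.2) := by rw [← hqb]
      have hne : p ≠ q := by
        intro h; rw [hp, hq] at h; simp at h
      have := htc hpA hqA hne
      rw [hp, hq] at this
      exact ((hG p.2 q.2).2.2).1 this
  · -- alphaS G s < 2f
    have hf0 : 0 < 2 * f := by omega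
    unfold alphaS
    rw [Finset.sup_lt_iff hf0]
    intro A hA
    rw [Finset.mem_filter] at hA
    have hA' := hA.2
    -- for each side, the projection is K_s-free in H
    have key : ∀ b : Bool, ((A.filter (fun p => p.1 = b)).image Prod.snd).card < f := by
      intro b
      set S := (A.filter (fun p => p.1 = b)).image Prod.snd with hS
      have hfree : (H.induce (S : Set (Fin m))).CliqueFree s := by
        have emb : H.induce (S : Set (Fin m)) ↪g G.induce (A : Set (Bool × Fin m)) := by
          refine ⟨⟨fun x => ⟨(b, x.1), ?_⟩, ?_⟩, ?_⟩
          · obtain ⟨x, hx⟩ := x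
            simp only [hS, Finset.coe_image, Set.mem_image, Finset.mem_coe,
              Finset.mem_filter] at hx
            obtain ⟨⟨bx, x'⟩, ⟨hxA, hbx⟩, hx2⟩ := hx
            subst hbx hx2
            exact hxA
          · intro x y hxy
            simp only [Subtype.mk.injEq, Prod.mk.injEq] at hxy
            exact Subtype.ext hxy.2
          · intro x y
            simp only [SimpleGraph.comap_adj, Function.Embedding.coeFn_mk]
            exact hside b x.1 y.1
        exact hA'.comap emb.isContained
      calc S.card ≤ alphaS H s := card_le_alphaS hfree
        _ < f := hα
    have h1 := key false
    have h2 := key true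
    rw [hcardSide] at h1 h2
    have hflip : A.filter (fun p => p.1 = true) = A.filter (fun p => ¬ p.1 = false) :=
      Finset.filter_congr (fun x _ => by simp)
    have hsum : (A.filter (fun p => p.1 = false)).card
        + (A.filter (fun p => p.1 = true)).card = A.card := by
      rw [hflip]
      exact Finset.card_filter_add_card_filter_not
        (s := A) (p := fun p : Bool × Fin m => p.1 = false)
    omega
end
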